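/- Let N = 2^K and let g be an element of 2·R⁻, where R⁻ = {Σ a_r (χ^r - χ^{-r}) : a_r ∈ ℤ} ⊂ ℤ[χ]/⟨1+χ+⋯+χ^{N-1}⟩. If g ∉ 4·R⁻, then there exists an odd natural number c such that g·(1-χ)^c ∈ 4·ℤ[χ]/⟨1+χ+⋯+χ^{N-1}⟩ but g·(1-χ)^{c-1} ∉ 4·ℤ[χ]/⟨1+χ+⋯+χ^{N-1}⟩. -/

import Mathlib

noncomputable section
open Polynomial

/-- The quotient ring ℤ[χ]/⟨1+χ+⋯+χ^{2^K-1}⟩. -/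
abbrev QZ (K : ℕ) :=
  Polynomial ℤ ⧸ Ideal.span {(∑ i ∈ Finset.range (2 ^ K), X ^ i : Polynomial ℤ)}

def mkZ (K : ℕ) : Polynomial ℤ →+* QZ K := Ideal.Quotient.mk _

/-- The (-1)-eigenspace R⁻, spanned over ℤ by χ^r - χ^{N-r} for 1 ≤ r ≤ N/2. -/
def Rneg (K : ℕ) : Submodule ℤ (QZ K) :=
  Submodule.span ℤ
    {x : QZ K | ∃ r : ℕ, 1 ≤ r ∧ r ≤ 2 ^ K / 2 ∧ x = mkZ K (X ^ r - X ^ (2 ^ K - r))}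

/-! ### Auxiliary lemmas over `ZMod 2` -/

lemma neg_self2 (q : (ZMod 2)[X]) : -q = q := CharTwo.neg_eq q

lemma reflect_sub2 (n : ℕ) (f g : (ZMod 2)[X]) :
    reflect n (f - g) = reflect n f - reflect n g := by
  ext i; simp [coeff_reflect]

lemma reflect_sum2 (n : ℕ) (s : Finset ℕ) (f : ℕ → (ZMod 2)[X]) :
    reflect n (∑ r ∈ s, f r) = ∑ r ∈ s, reflect n (f r) := by
  induction s using Finset.cons_induction with
  | empty => simp [reflect_zero]
  | cons a s ha ih => rw [Finset.sum_cons, Finset.sum_cons, reflect_add, ih]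

lemma reflect_XsubC : reflect 1 ((X - C 1 : (ZMod 2)[X])) = X - C 1 := by
  ext i
  rw [coeff_reflect]
  match i with
  | 0 => simp [revAt_le, coeff_sub, coeff_one]
  | 1 => simp [revAt_le, coeff_sub, coeff_one]
  | (n+2) => simp [revAt_eq_self_of_lt, coeff_sub, coeff_X, coeff_C]

lemma reflect_pow_XsubC (m : ℕ) :
    reflect m ((X - C 1 : (ZMod 2)[X]) ^ m) = (X - C 1) ^ m := by
  induction m with
  | zero => ext i; simp [coeff_reflect]
  | succ m ih =>
    have h1 : ((X - C 1 : (ZMod 2)[X])).natDegree ≤ 1 := le_of_eq (natDegree_X_sub_C 1)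
    have hm : ((X - C 1 : (ZMod 2)[X]) ^ m).natDegree ≤ m :=
      natDegree_pow_le.trans (by nlinarith [natDegree_X_sub_C (1 : ZMod 2)])
    rw [pow_succ, reflect_mul _ _ hm h1, ih, reflect_XsubC]

/-- Core parity lemma: a nonzero self-reciprocal (w.r.t. an even `n`) polynomial over `𝔽₂`
has even multiplicity of the root `1`. -/
lemma even_mult {n : ℕ} (hn : Even n) {p : (ZMod 2)[X]} (hp : p ≠ 0)
    (hd : p.natDegree ≤ n) (hs : reflect n p = p) :
    Even (p.rootMultiplicity 1) := by
  set a := p.rootMultiplicity 0 with ha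
  set q := p /ₘ (X - C 0) ^ a with hqdef
  have hq : (X - C 0) ^ a * q = p := pow_mul_divByMonic_rootMultiplicity_eq p 0
  have hq0 : eval 0 q ≠ 0 := eval_divByMonic_pow_rootMultiplicity_ne_zero 0 hp
  have hqne : q ≠ 0 := fun h => hq0 (by rw [h, eval_zero])
  set m := p.rootMultiplicity 1 with hm
  have hmq : q.rootMultiplicity 1 = m := by
    have h1 := rootMultiplicity_mul (p := (X - C (0:ZMod 2)) ^ a) (q := q) (x := 1)
      (by rw [hq]; exact hp)
    rw [hq] at h1
    have h2 : ((X - C (0:ZMod 2)) ^ a).rootMultiplicity 1 = 0 := by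
      apply rootMultiplicity_eq_zero
      simp [IsRoot]
    rw [← hm] at h1
    omega
  set T := q /ₘ (X - C 1) ^ (q.rootMultiplicity 1) with hTdef
  have hT : (X - C 1) ^ m * T = q := by
    have h := pow_mul_divByMonic_rootMultiplicity_eq q 1
    rw [hTdef, hmq]
    rw [hmq] at h
    exact h
  have hT1 : eval 1 T ≠ 0 := by
    have := eval_divByMonic_pow_rootMultiplicity_ne_zero (p := q) 1 hqne
    rwa [hTdef]
  have hTne : T ≠ 0 := fun h => hT1 (by rw [h, eval_zero])
  have hT0 : eval 0 T ≠ 0 := by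
    intro h
    apply hq0
    rw [← hT, eval_mul, h, mul_zero]
  have hp' : p = X ^ a * ((X - C 1) ^ m * T) := by
    rw [hT, ← hq]; simp
  set e := T.natDegree with he
  have hXC1 : (X - C 1 : (ZMod 2)[X]) ≠ 0 := X_sub_C_ne_zero 1
  have hdeg : p.natDegree = a + (m + e) := by
    rw [hp', natDegree_mul (pow_ne_zero _ X_ne_zero) (mul_ne_zero (pow_ne_zero _ hXC1) hTne),
      natDegree_mul (pow_ne_zero _ hXC1) hTne, natDegree_pow, natDegree_pow,
      natDegree_X, natDegree_X_sub_C]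
    ring
  set d := n - p.natDegree with hdd
  have hnd : n = (a + d) + (m + e) := by omega
  have hrT : reflect e T ≠ 0 := by
    intro h
    have h2 : (reflect e T).coeff 0 = T.coeff e := by
      rw [coeff_reflect, revAt_le (Nat.zero_le e), Nat.sub_zero]
    rw [h, coeff_zero] at h2
    exact leadingCoeff_ne_zero.mpr hTne h2.symm
  have hrefl : p = X ^ d * ((X - C 1) ^ m * reflect e T) := by
    conv_lhs => rw [← hs, hnd, hp']
    rw [reflect_mul _ _ (by simp [natDegree_X_pow]) (by
        rw [natDegree_mul (pow_ne_zero _ hXC1) hTne, natDegree_pow, natDegree_X_sub_C]; omega),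
      reflect_mul _ _ (by rw [natDegree_pow, natDegree_X_sub_C]; omega) le_rfl,
      reflect_pow_XsubC, reflect_monomial, revAt_le (Nat.le_add_right a d)]
    congr 2
    omega
  have hrT0 : eval 0 (reflect e T) ≠ 0 := by
    rw [← coeff_zero_eq_eval_zero, coeff_reflect, revAt_le (Nat.zero_le e), Nat.sub_zero]
    exact leadingCoeff_ne_zero.mpr hTne
  have hC1m0 : eval 0 ((X - C 1 : (ZMod 2)[X]) ^ m) ≠ 0 := by
    simp only [eval_pow, eval_sub, eval_X, eval_C, zero_sub]
    exact pow_ne_zero _ (neg_ne_zero.mpr one_ne_zero)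
  have had : a = d := by
    have hprodne : (X:(ZMod 2)[X]) ^ d * ((X - C 1) ^ m * reflect e T) ≠ 0 := by
      rw [← hrefl]; exact hp
    have h1 := rootMultiplicity_mul (p := (X:(ZMod 2)[X]) ^ d)
      (q := (X - C 1) ^ m * reflect e T) (x := 0) hprodne
    rw [← hrefl] at h1
    have h2 : ((X - C 1) ^ m * reflect e T).rootMultiplicity 0 = 0 := by
      apply rootMultiplicity_eq_zero
      intro hroot
      rw [IsRoot, eval_mul] at hroot
      rcases mul_eq_zero.mp hroot with h | h
      exacts [hC1m0 h, hrT0 h]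
    have h3 : (X ^ d : (ZMod 2)[X]).rootMultiplicity 0 = d := by
      simpa using rootMultiplicity_X_sub_C_pow (0 : ZMod 2) d
    rw [h2, h3] at h1
    omega
  have hTsym : T = reflect e T := by
    have h1 : X ^ a * ((X - C 1) ^ m * T) = X ^ a * ((X - C 1) ^ m * reflect e T) := by
      rw [← hp']
      rw [had, hrefl]
    have h2 := mul_left_cancel₀ (pow_ne_zero a (X_ne_zero : (X:(ZMod 2)[X]) ≠ 0)) h1
    exact mul_left_cancel₀ (pow_ne_zero m hXC1) h2
  have hee : Even e := by
    by_contra hodd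
    rw [Nat.not_even_iff_odd] at hodd
    apply hT1
    rw [eval_eq_sum_range, ← he]
    apply Finset.sum_involution (fun i _ => e - i)
    · intro i hi
      simp only [Finset.mem_range] at hi
      have hco : T.coeff (e - i) = T.coeff i := by
        conv_lhs => rw [hTsym]
        rw [coeff_reflect, revAt_le (by omega : e - i ≤ e)]
        congr 1
        omega
      simp only [one_pow, mul_one]
      rw [hco]
      exact CharTwo.add_self_eq_zero _
    · intro i hi hf
      simp only [Finset.mem_range] at hi
      obtain ⟨k, hk⟩ := hodd
      omega
    · intro i hi
      simp only [Finset.mem_range] at hi ⊢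
      omega
    · intro i hi
      simp only [Finset.mem_range] at hi
      omega
  obtain ⟨u, hu⟩ := hn
  obtain ⟨v, hv⟩ := hee
  exact ⟨u - a - v, by omega⟩

/-! ### Bridge between `QZ K` and `(ZMod 2)[X]` -/

def SZ (K : ℕ) : Polynomial ℤ := ∑ i ∈ Finset.range (2 ^ K), X ^ i

lemma map_SZ (K : ℕ) (hK : 1 ≤ K) :
    (SZ K).map (Int.castRingHom (ZMod 2)) = (X - C 1) ^ (2 ^ K - 1) := by
  have hmap : (SZ K).map (Int.castRingHom (ZMod 2))
      = ∑ i ∈ Finset.range (2 ^ K), (X : (ZMod 2)[X]) ^ i := by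
    rw [SZ, Polynomial.map_sum]
    refine Finset.sum_congr rfl fun i _ => by simp
  have hgeom := geom_sum_mul (X : (ZMod 2)[X]) (2 ^ K)
  have hchar : ((X : (ZMod 2)[X]) - C 1) ^ 2 ^ K = X ^ 2 ^ K - 1 := by
    rw [sub_pow_char_pow]
    simp
  have hXC1 : (X - C 1 : (ZMod 2)[X]) ≠ 0 := X_sub_C_ne_zero 1
  apply mul_right_cancel₀ hXC1
  rw [hmap]
  have h1 : (X : (ZMod 2)[X]) - 1 = X - C 1 := by rw [map_one]
  rw [← pow_succ, show 2 ^ K - 1 + 1 = 2 ^ K from by have := Nat.one_le_two_pow (n := K); omega,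
    hchar, ← h1, hgeom]

lemma two_eq_zero_mod2 : (2 : (ZMod 2)[X]) = 0 := by
  have := CharP.cast_eq_zero ((ZMod 2)[X]) 2
  simpa using this

lemma mkZ_SZ (K : ℕ) : mkZ K (SZ K) = 0 :=
  Ideal.Quotient.eq_zero_iff_mem.mpr (Ideal.subset_span rfl)

lemma dvd2_iff (K : ℕ) (hK : 1 ≤ K) (Q : Polynomial ℤ) :
    (2 : QZ K) ∣ mkZ K Q ↔
      ((X - C 1 : (ZMod 2)[X]) ^ (2 ^ K - 1)) ∣ Q.map (Int.castRingHom (ZMod 2)) := by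
  constructor
  · rintro ⟨t, ht⟩
    obtain ⟨A, rfl⟩ := Ideal.Quotient.mk_surjective t
    have h0 : mkZ K (Q - 2 * A) = 0 := by
      rw [map_sub, map_mul, map_ofNat, ht]
      exact sub_self _
    have hmem : Q - 2 * A ∈ Ideal.span {SZ K} := Ideal.Quotient.eq_zero_iff_mem.mp h0
    obtain ⟨B, hB⟩ := Ideal.mem_span_singleton.mp hmem
    refine ⟨B.map (Int.castRingHom (ZMod 2)), ?_⟩
    have := congrArg (Polynomial.map (Int.castRingHom (ZMod 2))) hB
    rw [Polynomial.map_sub, Polynomial.map_mul, Polynomial.map_mul, Polynomial.map_ofNat,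
      two_eq_zero_mod2, zero_mul, sub_zero, map_SZ K hK] at this
    exact this
  · rintro ⟨W, hW⟩
    obtain ⟨B, hBmap⟩ := Polynomial.map_surjective (Int.castRingHom (ZMod 2))
      (by rw [Int.coe_castRingHom]; exact ZMod.intCast_surjective) W
    have h0 : (Q - SZ K * B).map (Int.castRingHom (ZMod 2)) = 0 := by
      rw [Polynomial.map_sub, Polynomial.map_mul, hBmap, hW, map_SZ K hK, sub_self]
    have h2 : (C 2 : Polynomial ℤ) ∣ Q - SZ K * B := by
      rw [C_dvd_iff_dvd_coeff]
      intro i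
      have hc := congrArg (fun p => Polynomial.coeff p i) h0
      simp only [coeff_map, coeff_zero] at hc
      exact (ZMod.intCast_zmod_eq_zero_iff_dvd _ 2).mp (by exact_mod_cast hc)
    obtain ⟨A, hA⟩ := h2
    refine ⟨mkZ K A, ?_⟩
    have hQ : Q = SZ K * B + C 2 * A := by linear_combination hA
    rw [hQ, map_add, map_mul, map_mul, mkZ_SZ, zero_mul, zero_add,
      show (C 2 : Polynomial ℤ) = 2 from by norm_num, map_ofNat]

lemma tor4 (K : ℕ) (hK : 1 ≤ K) (Q : Polynomial ℤ)
    (h : (4 : QZ K) ∣ 2 * mkZ K Q) : (2 : QZ K) ∣ mkZ K Q := by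
  obtain ⟨t, ht⟩ := h
  obtain ⟨V, rfl⟩ := Ideal.Quotient.mk_surjective t
  have h0 : mkZ K (2 * Q - 4 * V) = 0 := by
    rw [map_sub, map_mul, map_mul, map_ofNat, map_ofNat, ht]
    exact sub_self _
  obtain ⟨B, hB⟩ := Ideal.mem_span_singleton.mp (Ideal.Quotient.eq_zero_iff_mem.mp h0)
  have hmap := congrArg (Polynomial.map (Int.castRingHom (ZMod 2))) hB
  rw [Polynomial.map_sub, Polynomial.map_mul, Polynomial.map_mul, Polynomial.map_ofNat,
    Polynomial.map_ofNat, Polynomial.map_mul, two_eq_zero_mod2,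
    show ((4 : (ZMod 2)[X]) = 0) from by
      have h4 : (4 : (ZMod 2)[X]) = 2 * 2 := by norm_num
      rw [h4, two_eq_zero_mod2, mul_zero], zero_mul, zero_mul, sub_zero] at hmap
  have hSne : ((SZ K).map (Int.castRingHom (ZMod 2))) ≠ 0 := by
    rw [map_SZ K hK]
    exact pow_ne_zero _ (X_sub_C_ne_zero 1)
  have hB0 : B.map (Int.castRingHom (ZMod 2)) = 0 := by
    rcases mul_eq_zero.mp hmap.symm with h | h
    · exact absurd h hSne
    · exact h
  have h2B : (C 2 : Polynomial ℤ) ∣ B := by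
    rw [C_dvd_iff_dvd_coeff]
    intro i
    have hc := congrArg (fun p => Polynomial.coeff p i) hB0
    simp only [coeff_map, coeff_zero] at hc
    exact (ZMod.intCast_zmod_eq_zero_iff_dvd _ 2).mp (by exact_mod_cast hc)
  obtain ⟨B', hB'⟩ := h2B
  have hC2 : (C 2 : Polynomial ℤ) = 2 := by norm_num
  rw [hC2] at hB'
  rw [hB'] at hB
  have h2 : (2 : Polynomial ℤ) * (Q - 2 * V) = 2 * (SZ K * B') := by
    rw [SZ]; linear_combination hB
  have key : Q - 2 * V = SZ K * B' :=
    mul_left_cancel₀ (by norm_num : (2 : Polynomial ℤ) ≠ 0) h2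
  have key2 : Q = 2 * V + SZ K * B' := by linear_combination key
  refine ⟨mkZ K V, ?_⟩
  rw [key2, map_add, map_mul, map_mul, map_ofNat, mkZ_SZ, zero_mul, add_zero]

/-- If g ∈ 2·R⁻ but g ∉ 4·R⁻, then there is an odd c with g·(1-χ)^c divisible by 4
but g·(1-χ)^{c-1} not divisible by 4 in ℤ[χ]/⟨1+χ+⋯+χ^{2^K-1}⟩. -/
theorem stmt17 (K : ℕ) (hK : 1 ≤ K) (g y : QZ K) (hy : y ∈ Rneg K) (hg : g = 2 * y)
    (h4 : ¬ ∃ z ∈ Rneg K, g = 4 * z) :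
    ∃ c : ℕ, Odd c ∧ (4 : QZ K) ∣ g * (mkZ K (1 - X)) ^ c ∧
      ¬ (4 : QZ K) ∣ g * (mkZ K (1 - X)) ^ (c - 1) := by
  set H := 2 ^ (K - 1) with hHdef
  have hH1 : 1 ≤ H := Nat.one_le_two_pow
  have hNH : 2 ^ K = 2 * H := by
    rw [hHdef, ← pow_succ']
    congr 1
    omega
  have hdiv : 2 ^ K / 2 = H := by rw [hNH]; exact Nat.mul_div_cancel_left _ (by norm_num)
  -- canonical representation of elements of R⁻
  have hrep : ∃ P : Polynomial ℤ,
      (P = ∑ r ∈ Finset.Icc 1 (H - 1), C (P.coeff r) * (X ^ r - X ^ (2 ^ K - r)))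
      ∧ y = mkZ K P := by
    refine Submodule.span_induction
      (p := fun x _ => ∃ P : Polynomial ℤ,
        (P = ∑ r ∈ Finset.Icc 1 (H - 1), C (P.coeff r) * (X ^ r - X ^ (2 ^ K - r)))
        ∧ x = mkZ K P) ?_ ?_ ?_ ?_ hy
    · rintro x ⟨r, hr1, hr2, rfl⟩
      rw [hdiv] at hr2
      by_cases hrH : r = H
      · refine ⟨0, by simp, ?_⟩
        subst hrH
        rw [show (2:ℕ) ^ K - H = H from by omega, sub_self, map_zero]
      · have hr3 : r ≤ H - 1 := by omega
        refine ⟨X ^ r - X ^ (2 ^ K - r), ?_, rfl⟩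
        symm
        rw [Finset.sum_eq_single r ?_ ?_]
        · have h1 : ((X ^ r - X ^ (2 ^ K - r) : Polynomial ℤ).coeff r) = 1 := by
            rw [coeff_sub, coeff_X_pow, coeff_X_pow, if_pos rfl, if_neg (by omega)]
            norm_num
          rw [h1, C_1, one_mul]
        · intro b hb hbr
          simp only [Finset.mem_Icc] at hb
          have h0 : ((X ^ r - X ^ (2 ^ K - r) : Polynomial ℤ).coeff b) = 0 := by
            rw [coeff_sub, coeff_X_pow, coeff_X_pow, if_neg hbr, if_neg (by omega)]
            norm_num
          rw [h0, C_0, zero_mul]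
        · intro hnot
          exact absurd (Finset.mem_Icc.mpr ⟨hr1, hr3⟩) hnot
    · exact ⟨0, by simp, (map_zero _).symm⟩
    · rintro x x' hx hx' ⟨P, hP, rfl⟩ ⟨P', hP', rfl⟩
      refine ⟨P + P', ?_, (map_add _ _ _).symm⟩
      calc P + P' = (∑ r ∈ Finset.Icc 1 (H - 1), C (P.coeff r) * (X ^ r - X ^ (2 ^ K - r)))
            + ∑ r ∈ Finset.Icc 1 (H - 1), C (P'.coeff r) * (X ^ r - X ^ (2 ^ K - r)) := by
            rw [← hP, ← hP']
        _ = ∑ r ∈ Finset.Icc 1 (H - 1), C ((P + P').coeff r) * (X ^ r - X ^ (2 ^ K - r)) := by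
            rw [← Finset.sum_add_distrib]
            exact Finset.sum_congr rfl fun r _ => by rw [coeff_add, C_add, add_mul]
    · rintro c x hx ⟨P, hP, rfl⟩
      refine ⟨C c * P, ?_, ?_⟩
      · calc C c * P = C c * ∑ r ∈ Finset.Icc 1 (H - 1),
              C (P.coeff r) * (X ^ r - X ^ (2 ^ K - r)) := by rw [← hP]
          _ = ∑ r ∈ Finset.Icc 1 (H - 1), C ((C c * P).coeff r) * (X ^ r - X ^ (2 ^ K - r)) := by
              rw [Finset.mul_sum]
              exact Finset.sum_congr rfl fun r _ => by rw [coeff_C_mul, C_mul, mul_assoc]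
      · rw [map_mul, show (C c : Polynomial ℤ) = (c : Polynomial ℤ) from by simp,
          map_intCast, zsmul_eq_mul]
  obtain ⟨P, hcan, hyP⟩ := hrep
  have hdegP : P.natDegree ≤ 2 ^ K - 1 := by
    conv_lhs => rw [hcan]
    refine natDegree_sum_le_of_forall_le _ _ fun r hr => ?_
    simp only [Finset.mem_Icc] at hr
    refine (natDegree_C_mul_le _ _).trans ((natDegree_sub_le _ _).trans ?_)
    rw [natDegree_X_pow, natDegree_X_pow, sup_le_iff]
    constructor <;> omega
  by_cases hall : ∀ r ∈ Finset.Icc 1 (H - 1), (2:ℤ) ∣ P.coeff r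
  · exfalso
    apply h4
    set P2 := ∑ r ∈ Finset.Icc 1 (H - 1), C (P.coeff r / 2) * (X ^ r - X ^ (2 ^ K - r))
      with hP2
    have hPP2 : P = 2 * P2 := by
      conv_lhs => rw [hcan]
      rw [hP2, Finset.mul_sum]
      refine Finset.sum_congr rfl fun r hr => ?_
      rw [← mul_assoc, show (2 : Polynomial ℤ) = C 2 from by norm_num, ← C_mul,
        Int.mul_ediv_cancel' (hall r hr)]
    refine ⟨mkZ K P2, ?_, ?_⟩
    · rw [hP2, map_sum]
      refine Submodule.sum_mem _ fun r hr => ?_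
      simp only [Finset.mem_Icc] at hr
      have hmem : mkZ K (X ^ r - X ^ (2 ^ K - r)) ∈ Rneg K :=
        Submodule.subset_span ⟨r, hr.1, by rw [hdiv]; omega, rfl⟩
      have heq : mkZ K (C (P.coeff r / 2) * (X ^ r - X ^ (2 ^ K - r)))
          = (P.coeff r / 2) • mkZ K (X ^ r - X ^ (2 ^ K - r)) := by
        rw [map_mul, show (C (P.coeff r / 2) : Polynomial ℤ) = ((P.coeff r / 2 : ℤ) : Polynomial ℤ)
            from by simp, map_intCast, zsmul_eq_mul]
      rw [heq]
      exact Submodule.smul_mem _ _ hmem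
    · rw [hg, hyP, hPP2, map_mul, map_ofNat]
      ring
  · push_neg at hall
    obtain ⟨r0, hr0mem, hr0⟩ := hall
    set f := Int.castRingHom (ZMod 2) with hf
    set p := P.map f with hp
    have hpne : p ≠ 0 := by
      intro h
      apply hr0
      have hc := congrArg (fun q => Polynomial.coeff q r0) h
      simp only [hp, coeff_map, coeff_zero] at hc
      exact (ZMod.intCast_zmod_eq_zero_iff_dvd _ 2).mp (by exact_mod_cast hc)
    have hpdeg : p.natDegree ≤ 2 ^ K - 1 := le_trans natDegree_map_le hdegP
    have hmapP : p = ∑ r ∈ Finset.Icc 1 (H - 1),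
        C ((P.coeff r : ZMod 2)) * ((X : (ZMod 2)[X]) ^ r - X ^ (2 ^ K - r)) := by
      rw [hp]
      conv_lhs => rw [hcan]
      rw [Polynomial.map_sum]
      refine Finset.sum_congr rfl fun r hr => ?_
      rw [Polynomial.map_mul, Polynomial.map_sub, Polynomial.map_pow, Polynomial.map_pow,
        map_X, map_C]
      simp [hf]
    have hsym : reflect (2 ^ K) p = p := by
      have hneg : reflect (2 ^ K) p = -p := by
        rw [hmapP, reflect_sum2, ← Finset.sum_neg_distrib]
        refine Finset.sum_congr rfl fun r hr => ?_
        simp only [Finset.mem_Icc] at hr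
        rw [reflect_C_mul, reflect_sub2, reflect_monomial, reflect_monomial,
          revAt_le (by omega), revAt_le (by omega),
          show 2 ^ K - (2 ^ K - r) = r from by omega]
        ring
      rw [hneg, neg_self2]
    have hNeven : Even (2 ^ K) := ⟨H, by omega⟩
    have hm := even_mult hNeven hpne (le_trans hpdeg (by omega)) hsym
    set m := p.rootMultiplicity 1 with hmdef
    have hmle : m ≤ 2 ^ K - 1 := by
      have hd := natDegree_le_of_dvd (pow_rootMultiplicity_dvd p 1) hpne
      rw [natDegree_pow, natDegree_X_sub_C, mul_one] at hd
      omega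
    have hmle2 : m ≤ 2 ^ K - 2 := by
      obtain ⟨u, hu⟩ := hm
      omega
    set c := 2 ^ K - 1 - m with hc
    set W := p /ₘ (X - C 1) ^ m with hWdef
    have hW : (X - C 1) ^ m * W = p := pow_mul_divByMonic_rootMultiplicity_eq p 1
    have hW1 : eval 1 W ≠ 0 := eval_divByMonic_pow_rootMultiplicity_ne_zero 1 hpne
    have h1X : ((1 : (ZMod 2)[X]) - X) = X - C 1 := by
      rw [C_1, ← neg_self2 (X - 1)]
      ring
    have hmap1X : ∀ j : ℕ, (P * (1 - X) ^ j).map f = p * (X - C 1) ^ j := by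
      intro j
      rw [Polynomial.map_mul, Polynomial.map_pow, Polynomial.map_sub, Polynomial.map_one,
        map_X, h1X, hp]
    have hgw : ∀ j : ℕ, g * (mkZ K (1 - X)) ^ j = 2 * mkZ K (P * (1 - X) ^ j) := by
      intro j
      rw [hg, hyP, map_mul, map_pow]
      ring
    refine ⟨c, ?_, ?_, ?_⟩
    · obtain ⟨u, hu⟩ := hm
      exact ⟨H - 1 - u, by omega⟩
    · rw [hgw c]
      have h2 : (2 : QZ K) ∣ mkZ K (P * (1 - X) ^ c) := by
        rw [dvd2_iff K hK, hmap1X]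
        refine ⟨W, ?_⟩
        have hmc : m + c = 2 ^ K - 1 := by omega
        calc p * (X - C 1) ^ c = (X - C 1) ^ (m + c) * W := by rw [pow_add, ← hW]; ring
          _ = (X - C 1) ^ (2 ^ K - 1) * W := by rw [hmc]
      obtain ⟨t, ht⟩ := h2
      exact ⟨t, by rw [ht]; ring⟩
    · intro hdvd
      rw [hgw (c - 1)] at hdvd
      have h2 := tor4 K hK _ hdvd
      rw [dvd2_iff K hK, hmap1X] at h2
      obtain ⟨Z, hZ⟩ := h2
      have hc1 : m + (c - 1) = 2 ^ K - 2 := by omega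
      have he1 : p * (X - C 1) ^ (c - 1) = (X - C 1) ^ (2 ^ K - 2) * W := by
        calc p * (X - C 1) ^ (c - 1) = (X - C 1) ^ (m + (c - 1)) * W := by
              rw [pow_add, ← hW]; ring
          _ = _ := by rw [hc1]
      rw [he1, show (2:ℕ) ^ K - 1 = (2 ^ K - 2) + 1 from by
        have := Nat.one_le_two_pow (n := K); omega, pow_succ] at hZ
      have hcancel : W = (X - C 1) * Z :=
        mul_left_cancel₀ (pow_ne_zero _ (X_sub_C_ne_zero 1)) (by rw [hZ]; ring)
      apply hW1
      rw [hcancel, eval_mul, eval_sub, eval_X, eval_C, sub_self, zero_mul]
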